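/- Let p be odd and P ∈ F_q[x] irreducible with gcd(b,P)=1 and deg(P)=d. If Δ = a^2+4b is a non-zero quadratic residue modulo P, then α(P) divides q^d − 1 and π(P) divides q^d − 1. -/

import Mathlib

open Polynomial

noncomputable def genFib {K : Type*} [Field K] (a b : K[X]) : ℕ → K[X]
  | 0 => 0
  | 1 => 1
  | n + 2 => a * genFib a b (n + 1) + b * genFib a b n

noncomputable def fibRank {K : Type*} [Field K] (a b M : K[X]) : ℕ :=
  sInf {n : ℕ | 0 < n ∧ M ∣ genFib a b n}

noncomputable def fibPeriod {K : Type*} [Field K] (a b M : K[X]) : ℕ :=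
  sInf {n : ℕ | 0 < n ∧ M ∣ genFib a b n ∧ M ∣ (genFib a b (n + 1) - 1)}

noncomputable def polyOrd {K : Type*} [Field K] (M g : K[X]) : ℕ :=
  orderOf (Ideal.Quotient.mk (Ideal.span {M}) g)

lemma sInf_mult_set {m N : ℕ} (hm : 0 < m) (hmN : m ∣ N) :
    sInf {n : ℕ | 0 < n ∧ m ∣ n} ∣ N := by
  have hmem : m ∈ {n : ℕ | 0 < n ∧ m ∣ n} := ⟨hm, dvd_rfl⟩
  have h1 := Nat.sInf_le hmem
  have h2 := Nat.sInf_mem ⟨m, hmem⟩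
  have : sInf {n : ℕ | 0 < n ∧ m ∣ n} = m :=
    le_antisymm h1 (Nat.le_of_dvd h2.1 h2.2)
  rw [this]; exact hmN

lemma genFib_key {K : Type*} [Field K] (a b : K[X]) {L : Type*} [Field L]
    (φ : K[X] →+* L) (r s : L) (hsum : r + s = φ a) (hmul : r * s = -φ b) :
    ∀ n, (r - s) * φ (genFib a b n) = r ^ n - s ^ n := by
  intro n
  induction n using Nat.twoStepInduction with
  | zero => simp [genFib]
  | one => simp [genFib]
  | more n ih1 ih2 =>
    show (r - s) * φ (a * genFib a b (n + 1) + b * genFib a b n) = _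
    rw [map_add, map_mul, map_mul, ← hsum]
    have hb : φ b = -(r * s) := by linear_combination hmul
    rw [hb]
    ring_nf
    ring_nf at ih1 ih2
    linear_combination (r + s) * ih2 - r * s * ih1

theorem stmt16 {K : Type*} [Field K] [Fintype K] (p : ℕ) [CharP K p] (hp : Odd p)
    (a b : K[X]) (hb : b ≠ 0)
    (P : K[X]) (hP : Irreducible P) (hco : IsCoprime b P)
    (hnz : ¬ P ∣ (a ^ 2 + 4 * b))
    (hqr : ∃ g : K[X], P ∣ (g ^ 2 - (a ^ 2 + 4 * b))) :
    fibRank a b P ∣ Fintype.card K ^ P.natDegree - 1 ∧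
    fibPeriod a b P ∣ Fintype.card K ^ P.natDegree - 1 := by
  obtain ⟨g, hg⟩ := hqr
  haveI : Fact (Irreducible P) := ⟨hP⟩
  have hP0 : P ≠ 0 := hP.ne_zero
  set L := AdjoinRoot P with hL
  letI : Fintype L := Module.fintypeOfFintype (AdjoinRoot.powerBasis hP0).basis
  have hcard : Fintype.card L = Fintype.card K ^ P.natDegree := by
    rw [Module.card_fintype (AdjoinRoot.powerBasis hP0).basis, Fintype.card_fin]
    rfl
  haveI : CharP L p := charP_of_injective_algebraMap (algebraMap K L).injective p
  have pp : p.Prime := CharP.char_is_prime K p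
  have h2 : (2 : L) ≠ 0 := by
    intro h
    have h2' : ((2 : ℕ) : L) = 0 := by exact_mod_cast h
    have := (CharP.cast_eq_zero_iff L p 2).mp h2'
    have hp2 : p = 2 := (Nat.prime_dvd_prime_iff_eq pp Nat.prime_two).mp this
    rw [hp2] at hp
    simp [Nat.odd_iff] at hp
  set φ : K[X] →+* L := AdjoinRoot.mk P with hφ
  have hbne : φ b ≠ 0 := by
    intro h
    exact hP.not_isUnit (hco.isUnit_of_dvd' (AdjoinRoot.mk_eq_zero.mp h) dvd_rfl)
  have hΔne : φ (a ^ 2 + 4 * b) ≠ 0 := fun h => hnz (AdjoinRoot.mk_eq_zero.mp h)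
  set G : L := φ g with hGdef
  have hG2 : G ^ 2 = (φ a) ^ 2 + 4 * φ b := by
    have h0 : φ (g ^ 2 - (a ^ 2 + 4 * b)) = 0 := AdjoinRoot.mk_eq_zero.mpr hg
    simp only [map_sub, map_add, map_mul, map_pow, map_ofNat] at h0
    linear_combination h0
  have hGne : G ≠ 0 := by
    intro h
    apply hΔne
    simp only [map_add, map_mul, map_pow, map_ofNat]
    rw [← hG2, h]; ring
  set r : L := (φ a + G) / 2 with hr
  set s : L := (φ a - G) / 2 with hs
  have hsum : r + s = φ a := by rw [hr, hs]; rw [← add_div, div_eq_iff h2]; ring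
  have hdiff : r - s = G := by rw [hr, hs]; rw [← sub_div, div_eq_iff h2]; ring
  have hmul : r * s = -φ b := by
    rw [hr, hs]
    rw [div_mul_div_comm, div_eq_iff (mul_ne_zero h2 h2)]
    linear_combination -hG2
  have key : ∀ n, G * φ (genFib a b n) = r ^ n - s ^ n := by
    intro n
    rw [← hdiff]
    exact genFib_key a b φ r s hsum hmul n
  have hrs0 : r * s ≠ 0 := by rw [hmul]; exact neg_ne_zero.mpr hbne
  have hrne : r ≠ 0 := fun h => hrs0 (by rw [h, zero_mul])
  have hsne : s ≠ 0 := fun h => hrs0 (by rw [h, mul_zero])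
  set N : ℕ := Fintype.card K ^ P.natDegree - 1 with hN
  have hpow : ∀ x : L, x ≠ 0 → x ^ N = 1 := by
    intro x hx
    rw [hN, ← hcard]
    exact FiniteField.pow_card_sub_one_eq_one x hx
  have hNpos : 0 < N := by
    rw [hN, ← hcard]
    have : 1 < Fintype.card L := Fintype.one_lt_card
    omega
  -- dvd iff statements
  have hzero : ∀ n, (P ∣ genFib a b n ↔ φ (genFib a b n) = 0) := by
    intro n; exact (AdjoinRoot.mk_eq_zero).symm
  constructor
  · -- rank
    set u : L := r / s with hu
    have hune : u ≠ 0 := div_ne_zero hrne hsne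
    have hufin : IsOfFinOrder u := isOfFinOrder_iff_pow_eq_one.mpr ⟨N, hNpos, hpow u hune⟩
    have hiff : ∀ n, (P ∣ genFib a b n ↔ orderOf u ∣ n) := by
      intro n
      rw [hzero n, orderOf_dvd_iff_pow_eq_one, hu, div_pow,
        div_eq_one_iff_eq (pow_ne_zero n hsne)]
      constructor
      · intro h
        have := key n
        rw [h, mul_zero] at this
        linear_combination -this
      · intro h
        have h0 : G * φ (genFib a b n) = 0 := by rw [key n, h, sub_self]
        exact (mul_eq_zero.mp h0).resolve_left hGne
    have hset : {n : ℕ | 0 < n ∧ P ∣ genFib a b n} = {n : ℕ | 0 < n ∧ orderOf u ∣ n} := by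
      ext n; simp [hiff n]
    rw [fibRank, hset]
    exact sInf_mult_set hufin.orderOf_pos (orderOf_dvd_of_pow_eq_one (hpow u hune))
  · -- period
    have hrfin : IsOfFinOrder r := isOfFinOrder_iff_pow_eq_one.mpr ⟨N, hNpos, hpow r hrne⟩
    have hsfin : IsOfFinOrder s := isOfFinOrder_iff_pow_eq_one.mpr ⟨N, hNpos, hpow s hsne⟩
    set m : ℕ := Nat.lcm (orderOf r) (orderOf s) with hm
    have hmpos : 0 < m := Nat.lcm_pos hrfin.orderOf_pos hsfin.orderOf_pos
    have hmN : m ∣ N := Nat.lcm_dvd (orderOf_dvd_of_pow_eq_one (hpow r hrne))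
      (orderOf_dvd_of_pow_eq_one (hpow s hsne))
    have hiff : ∀ n, ((P ∣ genFib a b n ∧ P ∣ (genFib a b (n + 1) - 1)) ↔ m ∣ n) := by
      intro n
      rw [hm, Nat.lcm_dvd_iff, orderOf_dvd_iff_pow_eq_one, orderOf_dvd_iff_pow_eq_one,
        hzero n]
      have hone : P ∣ (genFib a b (n + 1) - 1) ↔ φ (genFib a b (n + 1)) = 1 := by
        rw [← AdjoinRoot.mk_eq_zero]
        show φ _ = 0 ↔ _
        rw [map_sub, map_one, sub_eq_zero]
      rw [hone]
      constructor
      · rintro ⟨h1, h2⟩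
        have e1 : r ^ n = s ^ n := by
          have := key n; rw [h1, mul_zero] at this; linear_combination -this
        have e2 : G = r ^ (n + 1) - s ^ (n + 1) := by
          have := key (n + 1); rw [h2, mul_one] at this; exact this
        have hr1 : r ^ n = 1 := by
          have h0 : (r ^ n - 1) * G = 0 := by
            linear_combination (-(r ^ n)) * hdiff + (-s) * e1 + (-1 : L) * e2
          have := (mul_eq_zero.mp h0).resolve_right hGne
          linear_combination this
        exact ⟨hr1, by rw [← e1]; exact hr1⟩
      · rintro ⟨hr1, hs1⟩
        constructor
        · have h0 : G * φ (genFib a b n) = 0 := by rw [key n, hr1, hs1, sub_self]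
          exact (mul_eq_zero.mp h0).resolve_left hGne
        · have h0 : G * φ (genFib a b (n + 1)) = G * 1 := by
            rw [key (n + 1), mul_one]
            linear_combination r * hr1 - s * hs1 + hdiff
          exact mul_left_cancel₀ hGne h0
    have hset : {n : ℕ | 0 < n ∧ P ∣ genFib a b n ∧ P ∣ (genFib a b (n + 1) - 1)}
        = {n : ℕ | 0 < n ∧ m ∣ n} := by
      ext n; simp only [Set.mem_setOf_eq, and_congr_right_iff]
      intro _; exact hiff n
    rw [fibPeriod, hset]
    exact sInf_mult_set hmpos hmN
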